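/- Let a ∈ ℝ, λ > 1, c > 0, and let f : ℝ → ℝ be continuously differentiable with f'(x) ≥ −c for all x. Let T_* = T_*(a,λ,c). Then: (i) for every t ∈ [0,T_*) the map Φ_t(x) = x + f(x)·B(t) is a strictly increasing C¹ bijection of ℝ onto ℝ with Φ_t'(x) = μ(t,x) := 1 + f'(x)·B(t) ≥ 1 − c·B(t) > 0; (ii) the function φ defined on ℝ × [0,T_*) by φ(Φ_t(x), t) = f(x)/A(t) is a classical solution of the damped Burgers equation with initial data f; and (iii) its spatial derivative satisfies ∂_x φ(Φ_t(x), t) = (f'(x)/A(t)) / μ(t,x) for all x ∈ ℝ and t ∈ [0,T_*). -/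

import Mathlib

/-- `A(t) = exp((a/(λ−1))·(1 − (1+t)^(1−λ)))`, i.e. `A(t) = exp(∫₀ᵗ a/(1+s)^λ ds)`. -/
noncomputable def dampA (a lam t : ℝ) : ℝ :=
  Real.exp (a / (lam - 1) * (1 - (1 + t) ^ (1 - lam)))

/-- `B(t) = ∫₀ᵗ A(s)⁻¹ ds = ∫₀ᵗ exp((a/(λ−1))·((1+s)^(1−λ) − 1)) ds`. -/
noncomputable def dampB (a lam t : ℝ) : ℝ :=
  ∫ s in (0:ℝ)..t, Real.exp (a / (lam - 1) * ((1 + s) ^ (1 - lam) - 1))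

/-- `φ : ℝ × I → ℝ` (written in curried form `φ x t`) is a classical (C¹) solution of the
damped Burgers equation `∂_t φ + φ ∂_x φ = −a·φ/(1+t)^λ` on the time interval `I`,
with initial data `f`; `φx` and `φt` are its (continuous) partial derivatives. -/
def IsDampedBurgersSol (a lam : ℝ) (f : ℝ → ℝ) (I : Set ℝ) (φ φx φt : ℝ → ℝ → ℝ) : Prop :=
  (∀ x : ℝ, φ x 0 = f x) ∧
  (∀ x : ℝ, ∀ t ∈ I, HasDerivAt (fun y => φ y t) (φx x t) x) ∧
  (∀ x : ℝ, ∀ t ∈ I, HasDerivWithinAt (fun s => φ x s) (φt x t) I t) ∧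
  ContinuousOn (fun p : ℝ × ℝ => φ p.1 p.2) (Set.univ ×ˢ I) ∧
  ContinuousOn (fun p : ℝ × ℝ => φx p.1 p.2) (Set.univ ×ˢ I) ∧
  ContinuousOn (fun p : ℝ × ℝ => φt p.1 p.2) (Set.univ ×ˢ I) ∧
  (∀ x : ℝ, ∀ t ∈ I, φt x t + φ x t * φx x t = -a * φ x t / (1 + t) ^ lam)


open Real Set Filter

/-- integrand of B -/
noncomputable def dampb (a lam t : ℝ) : ℝ := Real.exp (a / (lam - 1) * ((1 + t) ^ (1 - lam) - 1))

lemma dampb_pos (a lam t : ℝ) : 0 < dampb a lam t := Real.exp_pos _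

lemma dampA_pos (a lam t : ℝ) : 0 < dampA a lam t := Real.exp_pos _

lemma dampA_zero (a lam : ℝ) : dampA a lam 0 = 1 := by
  simp [dampA]

lemma dampB_zero (a lam : ℝ) : dampB a lam 0 = 0 := by
  simp [dampB]

lemma dampA_mul_dampb (a lam t : ℝ) : dampA a lam t * dampb a lam t = 1 := by
  rw [dampA, dampb, ← Real.exp_add]
  rw [show a / (lam - 1) * (1 - (1 + t) ^ (1 - lam)) + a / (lam - 1) * ((1 + t) ^ (1 - lam) - 1) = 0 by ring]
  exact Real.exp_zero

lemma dampb_eq_inv (a lam t : ℝ) : dampb a lam t = (dampA a lam t)⁻¹ :=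
  eq_inv_of_mul_eq_one_left (by rw [mul_comm]; exact dampA_mul_dampb a lam t)

lemma continuousAt_dampb (a lam : ℝ) {t : ℝ} (ht : -1 < t) : ContinuousAt (dampb a lam) t := by
  have h1 : ContinuousAt (fun s : ℝ => (1 + s) ^ (1 - lam)) t := by
    have : ContinuousAt (fun x : ℝ => x ^ (1 - lam)) (1 + t) :=
      Real.continuousAt_rpow_const _ _ (Or.inl (by linarith))
    exact this.comp (by fun_prop)
  exact Real.continuous_exp.continuousAt.comp (by fun_prop)

lemma continuousOn_dampb (a lam : ℝ) : ContinuousOn (dampb a lam) (Set.Ioi (-1)) :=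
  fun t ht => (continuousAt_dampb a lam ht).continuousWithinAt

lemma hasDerivAt_dampB (a lam : ℝ) {t : ℝ} (ht : -1 < t) :
    HasDerivAt (dampB a lam) (dampb a lam t) t := by
  have hsub : Set.uIcc (0:ℝ) t ⊆ Set.Ioi (-1) := by
    intro s hs
    have := hs.1
    rcases le_total 0 t with h | h
    · rw [Set.uIcc_of_le h] at hs; exact lt_of_lt_of_le (by linarith) hs.1
    · rw [Set.uIcc_of_ge h] at hs; exact lt_of_lt_of_le ht hs.1
  exact intervalIntegral.integral_hasDerivAt_right
    (((continuousOn_dampb a lam).mono hsub).intervalIntegrable)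
    ((continuousOn_dampb a lam).stronglyMeasurableAtFilter isOpen_Ioi t ht)
    (continuousAt_dampb a lam ht)

lemma hasDerivAt_dampA (a lam : ℝ) (hlam : 1 < lam) {t : ℝ} (ht : -1 < t) :
    HasDerivAt (dampA a lam) (a * (1 + t) ^ (-lam) * dampA a lam t) t := by
  have h1 : HasDerivAt (fun s : ℝ => 1 + s) 1 t := (hasDerivAt_id t).const_add 1
  have h2 : HasDerivAt (fun x : ℝ => x ^ (1 - lam)) ((1 - lam) * (1 + t) ^ (1 - lam - 1)) (1 + t) :=
    Real.hasDerivAt_rpow_const (Or.inl (by linarith))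
  have h3 : HasDerivAt (fun s : ℝ => (1 + s) ^ (1 - lam)) ((1 - lam) * (1 + t) ^ (1 - lam - 1) * 1) t :=
    h2.comp t h1
  have h4 : HasDerivAt (fun s : ℝ => a / (lam - 1) * (1 - (1 + s) ^ (1 - lam)))
      (a / (lam - 1) * (-((1 - lam) * (1 + t) ^ (1 - lam - 1) * 1))) t :=
    ((h3.const_sub 1)).const_mul _
  have h5 := h4.exp
  convert h5 using 1
  · rfl
  rw [show a / (lam - 1) * -((1 - lam) * (1 + t) ^ (1 - lam - 1) * 1)
      = a * (1 + t) ^ (1 - lam - 1) from by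
    have h : lam - 1 ≠ 0 := by linarith
    field_simp
    ring]
  rw [show (1 : ℝ) - lam - 1 = -lam by ring]
  rw [dampA]
  ring

lemma contDiffAt_dampB (a lam : ℝ) {t : ℝ} (ht : -1 < t) :
    ContDiffAt ℝ 1 (dampB a lam) t := by
  rw [contDiffAt_one_iff]
  refine ⟨fun s => ContinuousLinearMap.smulRight (1 : ℝ →L[ℝ] ℝ) (dampb a lam s),
    Set.Ioi (-1), isOpen_Ioi.mem_nhds ht, ?_, ?_⟩
  · exact ((ContinuousLinearMap.smulRightL ℝ ℝ ℝ (1 : ℝ →L[ℝ] ℝ)).continuous).comp_continuousOn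
      (continuousOn_dampb a lam)
  · intro s hs
    exact (hasDerivAt_dampB a lam hs).hasFDerivAt

lemma contDiffAt_dampA (a lam : ℝ) {t : ℝ} (ht : -1 < t) :
    ContDiffAt ℝ 1 (dampA a lam) t := by
  apply Real.contDiff_exp.contDiffAt.comp
  apply ContDiffAt.mul contDiffAt_const
  apply ContDiffAt.sub contDiffAt_const
  exact (Real.contDiffAt_rpow_const_of_ne (show (1:ℝ) + t ≠ 0 by linarith)).comp t
    (contDiffAt_const.add contDiffAt_id)

lemma strictMonoOn_dampB (a lam : ℝ) : StrictMonoOn (dampB a lam) (Set.Ici 0) := by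
  apply strictMonoOn_of_deriv_pos (convex_Ici 0)
  · intro s hs
    exact ((hasDerivAt_dampB a lam (by simp at hs; linarith)).continuousAt).continuousWithinAt
  · intro s hs
    rw [interior_Ici] at hs
    rw [(hasDerivAt_dampB a lam (by simp at hs; linarith)).deriv]
    exact dampb_pos a lam s

lemma dampB_nonneg (a lam : ℝ) {t : ℝ} (ht : 0 ≤ t) : 0 ≤ dampB a lam t := by
  have := (strictMonoOn_dampB a lam).monotoneOn (Set.self_mem_Ici) ht ht
  rwa [dampB_zero] at this

lemma dampB_lt (a lam : ℝ) {t T : ℝ} (ht : 0 ≤ t) (hT : t < T) :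
    dampB a lam t < dampB a lam T :=
  strictMonoOn_dampB a lam ht (le_of_lt (lt_of_le_of_lt ht hT)) hT

section Char

variable {a lam c Tstar : ℝ} (hlam : 1 < lam) (hc : 0 < c)
  (hTs : 0 < Tstar) (hBTs : dampB a lam Tstar = 1 / c)
  {f : ℝ → ℝ} (hf : ContDiff ℝ 1 f) (hf' : ∀ x : ℝ, -c ≤ deriv f x)
  {t : ℝ} (ht : t ∈ Set.Ico (0 : ℝ) Tstar)

include hc hTs hBTs ht in
lemma cB_lt_one : 0 ≤ dampB a lam t ∧ c * dampB a lam t < 1 := by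
  refine ⟨dampB_nonneg a lam ht.1, ?_⟩
  have h := dampB_lt a lam ht.1 ht.2
  rw [hBTs] at h
  rw [← lt_div_iff₀' hc]
  exact h

include hc hTs hBTs hf' ht in
lemma mu_bounds : ∀ x : ℝ, 0 < 1 - c * dampB a lam t ∧
    1 - c * dampB a lam t ≤ 1 + deriv f x * dampB a lam t := by
  intro x
  obtain ⟨hB0, hB1⟩ := cB_lt_one hc hTs hBTs ht
  constructor
  · linarith
  · nlinarith [hf' x]

include hf in
lemma hasDerivAt_chMap : ∀ x : ℝ,
    HasDerivAt (fun y => y + f y * dampB a lam t) (1 + deriv f x * dampB a lam t) x := by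
  intro x
  exact (hasDerivAt_id x).add
    (((hf.differentiable one_ne_zero x).hasDerivAt).mul_const _)

include hc hTs hBTs hf hf' ht in
lemma strictMono_chMap : StrictMono (fun x => x + f x * dampB a lam t) := by
  apply strictMono_of_deriv_pos
  intro x
  rw [(hasDerivAt_chMap hf x).deriv]
  have := mu_bounds hc hTs hBTs hf' ht x
  linarith [this.1, this.2]

include hc hTs hBTs hf hf' ht in
lemma surjective_chMap : Function.Surjective (fun x => x + f x * dampB a lam t) := by
  set δ := 1 - c * dampB a lam t with hδdef
  have hδ : 0 < δ := (mu_bounds hc hTs hBTs hf' ht 0).1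
  set Φ := fun x => x + f x * dampB a lam t with hΦ
  have hdiff : Differentiable ℝ Φ := fun x => (hasDerivAt_chMap hf x).differentiableAt
  have hmono : Monotone (fun x => Φ x - δ * x) := by
    apply monotone_of_deriv_nonneg (by fun_prop)
    intro x
    rw [deriv_fun_sub (hdiff x) (by fun_prop), (hasDerivAt_chMap hf x).deriv,
      deriv_const_mul _ (by fun_prop), deriv_id'']
    have := (mu_bounds hc hTs hBTs hf' ht x).2
    simp only [mul_one]
    linarith
  have hub : ∀ x : ℝ, 0 ≤ x → Φ 0 + δ * x ≤ Φ x := by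
    intro x hx
    have := hmono hx
    simp only [mul_zero, sub_zero] at this
    linarith
  have hlb : ∀ x : ℝ, x ≤ 0 → Φ x ≤ Φ 0 + δ * x := by
    intro x hx
    have := hmono hx
    simp only [mul_zero, sub_zero] at this
    linarith
  have htop : Filter.Tendsto Φ Filter.atTop Filter.atTop := by
    apply Filter.tendsto_atTop_mono' _ (_ : (fun x => Φ 0 + δ * x) ≤ᶠ[Filter.atTop] Φ)
    · exact Filter.tendsto_atTop_add_const_left _ _ (Filter.tendsto_id.const_mul_atTop hδ)
    · filter_upwards [Filter.eventually_ge_atTop 0] with x hx using hub x hx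
  have hbot : Filter.Tendsto Φ Filter.atBot Filter.atBot := by
    apply Filter.tendsto_atBot_mono' _ (_ : Φ ≤ᶠ[Filter.atBot] (fun x => Φ 0 + δ * x))
    · exact Filter.tendsto_atBot_add_const_left _ _ (Filter.tendsto_id.const_mul_atBot hδ)
    · filter_upwards [Filter.eventually_le_atBot 0] with x hx using hlb x hx
  exact (Continuous.surjective (by fun_prop) htop hbot)

end Char

/-- The invertible linear map `(dx, dt) ↦ (m·dx + b·dt, dt)`. -/
noncomputable def shearEquiv (m b : ℝ) (hm : m ≠ 0) : (ℝ × ℝ) ≃L[ℝ] (ℝ × ℝ) :=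
  LinearEquiv.toContinuousLinearEquiv
  { toFun := fun p => (m * p.1 + b * p.2, p.2)
    invFun := fun p => ((p.1 - b * p.2) / m, p.2)
    map_add' := by intro p q; simp [Prod.ext_iff]; ring
    map_smul' := by intro r p; simp [Prod.ext_iff, smul_eq_mul]; ring
    left_inv := by intro p; simp [Prod.ext_iff]; field_simp
    right_inv := by intro p; simp [Prod.ext_iff]; field_simp; ring }

@[simp] lemma shearEquiv_apply (m b : ℝ) (hm : m ≠ 0) (p : ℝ × ℝ) :
    shearEquiv m b hm p = (m * p.1 + b * p.2, p.2) := rfl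

@[simp] lemma shearEquiv_symm_apply (m b : ℝ) (hm : m ≠ 0) (p : ℝ × ℝ) :
    (shearEquiv m b hm).symm p = ((p.1 - b * p.2) / m, p.2) := rfl

section Psi

variable {a lam c Tstar : ℝ} (hlam : 1 < lam) (hc : 0 < c)
  (hTs : 0 < Tstar) (hBTs : dampB a lam Tstar = 1 / c)
  {f : ℝ → ℝ} (hf : ContDiff ℝ 1 f) (hf' : ∀ x : ℝ, -c ≤ deriv f x)

include hf in
lemma contDiffAt_Psi {x0 t0 : ℝ} (ht0 : -1 < t0) :
    ContDiffAt ℝ 1 (fun p : ℝ × ℝ => (p.1 + f p.1 * dampB a lam p.2, p.2)) (x0, t0) := by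
  apply ContDiffAt.prodMk _ contDiffAt_snd
  apply ContDiffAt.add contDiffAt_fst
  exact ((hf.comp contDiff_fst).contDiffAt).mul
    ((contDiffAt_dampB a lam ht0).comp (f := Prod.snd) (x0, t0) contDiffAt_snd)

include hf in
lemma hasFDerivAt_Psi {x0 t0 : ℝ} (ht0 : -1 < t0)
    (hm : (1 + deriv f x0 * dampB a lam t0) ≠ 0) :
    HasFDerivAt (fun p : ℝ × ℝ => (p.1 + f p.1 * dampB a lam p.2, p.2))
      (shearEquiv (1 + deriv f x0 * dampB a lam t0) (f x0 * dampb a lam t0) hm :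
        (ℝ × ℝ) →L[ℝ] (ℝ × ℝ)) (x0, t0) := by
  have hfst : HasFDerivAt (fun p : ℝ × ℝ => p.1)
      (ContinuousLinearMap.fst ℝ ℝ ℝ) (x0, t0) := hasFDerivAt_fst
  have hsnd : HasFDerivAt (fun p : ℝ × ℝ => p.2)
      (ContinuousLinearMap.snd ℝ ℝ ℝ) (x0, t0) := hasFDerivAt_snd
  have hfG : HasFDerivAt (fun p : ℝ × ℝ => f p.1)
      (deriv f x0 • ContinuousLinearMap.fst ℝ ℝ ℝ) (x0, t0) :=
    ((hf.differentiable one_ne_zero x0).hasDerivAt).comp_hasFDerivAt _ hfst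
  have hBp : HasFDerivAt (fun p : ℝ × ℝ => dampB a lam p.2)
      (dampb a lam t0 • ContinuousLinearMap.snd ℝ ℝ ℝ) (x0, t0) :=
    by have := (hasDerivAt_dampB a lam ht0).comp_hasFDerivAt (x0, t0) hsnd; exact this
  have hmul := hfG.mul hBp
  have h1 := hfst.add hmul
  have h := h1.prodMk hsnd
  refine h.congr_fderiv ?_
  apply ContinuousLinearMap.ext
  rintro ⟨dx, dt⟩
  simp [Prod.ext_iff]
  ring

end Psi

/-- inverse of the characteristic map -/
noncomputable def chInv (a lam : ℝ) (f : ℝ → ℝ) (y t : ℝ) : ℝ :=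
  Function.invFun (fun x => x + f x * dampB a lam t) y

section Inv

variable {a lam c Tstar : ℝ} (hlam : 1 < lam) (hc : 0 < c)
  (hTs : 0 < Tstar) (hBTs : dampB a lam Tstar = 1 / c)
  {f : ℝ → ℝ} (hf : ContDiff ℝ 1 f) (hf' : ∀ x : ℝ, -c ≤ deriv f x)

include hlam hc hTs hBTs hf hf' in
lemma chInv_right {t : ℝ} (ht : t ∈ Set.Ico (0:ℝ) Tstar) (y : ℝ) :
    chInv a lam f y t + f (chInv a lam f y t) * dampB a lam t = y :=
  Function.rightInverse_invFun (surjective_chMap hc hTs hBTs hf hf' ht) y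

include hlam hc hTs hBTs hf hf' in
lemma chInv_left {t : ℝ} (ht : t ∈ Set.Ico (0:ℝ) Tstar) (x : ℝ) :
    chInv a lam f (x + f x * dampB a lam t) t = x :=
  Function.leftInverse_invFun (strictMono_chMap hc hTs hBTs hf hf' ht).injective x

include hlam hc hTs hBTs hf hf' in
/-- The main implicit-function-theorem lemma: joint differentiability (within
`univ ×ˢ Ico 0 Tstar`) of `(y,t) ↦ chInv y t` at a point `(Φ_{t0}(x0), t0)`. -/
lemma hasFDerivWithinAt_chInv {x0 t0 : ℝ} (ht0 : t0 ∈ Set.Ico (0:ℝ) Tstar)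
    (hm : (1 + deriv f x0 * dampB a lam t0) ≠ 0) :
    HasFDerivWithinAt (fun p : ℝ × ℝ => chInv a lam f p.1 p.2)
      ((ContinuousLinearMap.fst ℝ ℝ ℝ).comp
        ((shearEquiv (1 + deriv f x0 * dampB a lam t0) (f x0 * dampb a lam t0) hm).symm :
          (ℝ × ℝ) →L[ℝ] (ℝ × ℝ)))
      (Set.univ ×ˢ Set.Ico (0:ℝ) Tstar) (x0 + f x0 * dampB a lam t0, t0) := by
  have ht0' : (-1:ℝ) < t0 := lt_of_lt_of_le (by norm_num) ht0.1
  have hstrict := (contDiffAt_Psi hf (a := a) (lam := lam) (x0 := x0) ht0').hasStrictFDerivAt'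
    (hasFDerivAt_Psi hf ht0' hm) one_ne_zero
  set Ψ := fun p : ℝ × ℝ => (p.1 + f p.1 * dampB a lam p.2, p.2) with hΨ
  set e := shearEquiv (1 + deriv f x0 * dampB a lam t0) (f x0 * dampb a lam t0) hm with he
  set χ := hstrict.localInverse Ψ e (x0, t0) with hχ
  have hq0 : Ψ (x0, t0) = (x0 + f x0 * dampB a lam t0, t0) := rfl
  have hχd : HasFDerivAt χ (e.symm : (ℝ × ℝ) →L[ℝ] (ℝ × ℝ)) (x0 + f x0 * dampB a lam t0, t0) := by
    rw [← hq0]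
    exact hstrict.to_localInverse.hasFDerivAt
  have hfirst : HasFDerivWithinAt (fun p => (χ p).1)
      ((ContinuousLinearMap.fst ℝ ℝ ℝ).comp (e.symm : (ℝ × ℝ) →L[ℝ] (ℝ × ℝ)))
      (Set.univ ×ˢ Set.Ico (0:ℝ) Tstar) (x0 + f x0 * dampB a lam t0, t0) :=
    (((ContinuousLinearMap.fst ℝ ℝ ℝ).hasFDerivAt).comp _ hχd).hasFDerivWithinAt
  apply hfirst.congr_of_eventuallyEq
  · -- equal on a neighborhood within S
    have hev : ∀ᶠ p in nhdsWithin (x0 + f x0 * dampB a lam t0, t0)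
        (Set.univ ×ˢ Set.Ico (0:ℝ) Tstar), Ψ (χ p) = p := by
      apply nhdsWithin_le_nhds
      rw [← hq0]
      exact hstrict.eventually_right_inverse
    filter_upwards [hev, self_mem_nhdsWithin] with p hp hpS
    -- `hp : Ψ (χ p) = p`, `hpS : p ∈ univ ×ˢ Ico 0 Tstar`
    obtain ⟨hp1, hp2⟩ := Prod.ext_iff.1 hp
    -- `(χ p).2 = p.2` from second coordinate
    have h2 : (χ p).2 = p.2 := hp2
    have h1 : (χ p).1 + f (χ p).1 * dampB a lam p.2 = p.1 := by
      have := hp1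
      simpa [Ψ, h2] using this
    have hpt : p.2 ∈ Set.Ico (0:ℝ) Tstar := hpS.2
    have := chInv_left hlam hc hTs hBTs hf hf' hpt (χ p).1
    rw [h1] at this
    exact this
  · -- equal at the point
    have h0 : χ (x0 + f x0 * dampB a lam t0, t0) = (x0, t0) := by
      rw [← hq0]
      exact hstrict.localInverse_apply_image
    rw [h0]
    exact (chInv_left hlam hc hTs hBTs hf hf' ht0 x0)

end Inv

section Phi

variable {a lam c Tstar : ℝ} (hlam : 1 < lam) (hc : 0 < c)
  (hTs : 0 < Tstar) (hBTs : dampB a lam Tstar = 1 / c)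
  {f : ℝ → ℝ} (hf : ContDiff ℝ 1 f) (hf' : ∀ x : ℝ, -c ≤ deriv f x)

include hlam hc hTs hBTs hf hf' in
lemma hasFDerivWithinAt_phi {x0 t0 : ℝ} (ht0 : t0 ∈ Set.Ico (0:ℝ) Tstar) :
    HasFDerivWithinAt (fun p : ℝ × ℝ => f (chInv a lam f p.1 p.2) * (dampA a lam p.2)⁻¹)
      (((deriv f x0 / dampA a lam t0) / (1 + deriv f x0 * dampB a lam t0)) •
          ContinuousLinearMap.fst ℝ ℝ ℝ +
        (-a * (f x0 / dampA a lam t0) / (1 + t0) ^ lam -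
          (f x0 / dampA a lam t0) *
            ((deriv f x0 / dampA a lam t0) / (1 + deriv f x0 * dampB a lam t0))) •
          ContinuousLinearMap.snd ℝ ℝ ℝ)
      (Set.univ ×ˢ Set.Ico (0:ℝ) Tstar) (x0 + f x0 * dampB a lam t0, t0) := by
  have ht0' : (-1:ℝ) < t0 := lt_of_lt_of_le (by norm_num) ht0.1
  have hmpos := mu_bounds hc hTs hBTs hf' ht0 x0
  have hm : (1 + deriv f x0 * dampB a lam t0) ≠ 0 := by linarith [hmpos.1, hmpos.2]
  have hG := hasFDerivWithinAt_chInv hlam hc hTs hBTs hf hf' ht0 hm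
  have hGval : chInv a lam f (x0 + f x0 * dampB a lam t0) t0 = x0 :=
    chInv_left hlam hc hTs hBTs hf hf' ht0 x0
  -- derivative of f ∘ chInv
  have hfd : HasDerivAt f (deriv f x0)
      ((fun p : ℝ × ℝ => chInv a lam f p.1 p.2) (x0 + f x0 * dampB a lam t0, t0)) := by
    simpa [hGval] using (hf.differentiable one_ne_zero x0).hasDerivAt
  have hcomp := HasDerivAt.comp_hasFDerivWithinAt (f := fun p : ℝ × ℝ => chInv a lam f p.1 p.2)
    (x0 + f x0 * dampB a lam t0, t0) hfd hG
  -- derivative of (A p.2)⁻¹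
  have hA : dampA a lam t0 ≠ 0 := (dampA_pos a lam t0).ne'
  have hAinv : HasDerivAt (fun s => (dampA a lam s)⁻¹)
      (-(a * (1 + t0) ^ (-lam) * dampA a lam t0) / (dampA a lam t0) ^ 2) t0 :=
    (hasDerivAt_dampA a lam hlam ht0').inv hA
  have hAcomp : HasFDerivAt (fun p : ℝ × ℝ => (dampA a lam p.2)⁻¹)
      ((-(a * (1 + t0) ^ (-lam) * dampA a lam t0) / (dampA a lam t0) ^ 2) •
        ContinuousLinearMap.snd ℝ ℝ ℝ) (x0 + f x0 * dampB a lam t0, t0) :=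
    by have := hAinv.comp_hasFDerivAt (x0 + f x0 * dampB a lam t0, t0) (show HasFDerivAt (fun p : ℝ × ℝ => p.2) (ContinuousLinearMap.snd ℝ ℝ ℝ) (x0 + f x0 * dampB a lam t0, t0) from hasFDerivAt_snd); exact this
  have hfull := hcomp.mul hAcomp.hasFDerivWithinAt
  have heq : (((deriv f x0 / dampA a lam t0) / (1 + deriv f x0 * dampB a lam t0)) •
          ContinuousLinearMap.fst ℝ ℝ ℝ +
        (-a * (f x0 / dampA a lam t0) / (1 + t0) ^ lam -
          (f x0 / dampA a lam t0) *
            ((deriv f x0 / dampA a lam t0) / (1 + deriv f x0 * dampB a lam t0))) •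
          ContinuousLinearMap.snd ℝ ℝ ℝ)
      = (f ∘ fun p : ℝ × ℝ => chInv a lam f p.1 p.2) (x0 + f x0 * dampB a lam t0, t0) •
          ((-(a * (1 + t0) ^ (-lam) * dampA a lam t0) / (dampA a lam t0) ^ 2) •
            ContinuousLinearMap.snd ℝ ℝ ℝ) +
        (fun p : ℝ × ℝ => (dampA a lam p.2)⁻¹) (x0 + f x0 * dampB a lam t0, t0) •
          (deriv f x0 • ((ContinuousLinearMap.fst ℝ ℝ ℝ).comp
            ((shearEquiv (1 + deriv f x0 * dampB a lam t0) (f x0 * dampb a lam t0) hm).symm :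
              (ℝ × ℝ) →L[ℝ] (ℝ × ℝ)))) := by
    apply ContinuousLinearMap.ext
    rintro ⟨dy, dt⟩
    simp only [ContinuousLinearMap.add_apply, ContinuousLinearMap.coe_smul',
      Pi.smul_apply, ContinuousLinearMap.coe_comp', Function.comp_apply,
      ContinuousLinearMap.coe_fst', ContinuousLinearMap.coe_snd',
      ContinuousLinearEquiv.coe_coe, shearEquiv_symm_apply, smul_eq_mul, hGval]
    have hb : dampb a lam t0 = (dampA a lam t0)⁻¹ := dampb_eq_inv a lam t0
    have hneg : (1 + t0 : ℝ) ^ (-lam) = ((1 + t0) ^ lam)⁻¹ :=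
      Real.rpow_neg (by linarith) lam
    have hpow : ((1 + t0 : ℝ) ^ lam) ≠ 0 := (Real.rpow_pos_of_pos (by linarith) lam).ne'
    rw [hb, hneg]
    field_simp
    ring
  rw [heq]
  exact hfull
end Phi

section Cont

variable {a lam c Tstar : ℝ} (hlam : 1 < lam) (hc : 0 < c)
  (hTs : 0 < Tstar) (hBTs : dampB a lam Tstar = 1 / c)
  {f : ℝ → ℝ} (hf : ContDiff ℝ 1 f) (hf' : ∀ x : ℝ, -c ≤ deriv f x)

include hlam hc hTs hBTs hf hf' in
lemma continuousOn_chInv :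
    ContinuousOn (fun p : ℝ × ℝ => chInv a lam f p.1 p.2)
      (Set.univ ×ˢ Set.Ico (0:ℝ) Tstar) := by
  rintro ⟨y, t⟩ hq
  have htI : t ∈ Set.Ico (0:ℝ) Tstar := hq.2
  have hmpos := mu_bounds hc hTs hBTs hf' htI (chInv a lam f y t)
  have hm : (1 + deriv f (chInv a lam f y t) * dampB a lam t) ≠ 0 := by
    linarith [hmpos.1, hmpos.2]
  have h := (hasFDerivWithinAt_chInv hlam hc hTs hBTs hf hf' htI hm).continuousWithinAt
  rwa [chInv_right hlam hc hTs hBTs hf hf' htI y] at h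

lemma continuousOn_dampA_snd (hlam : 1 < lam) :
    ContinuousOn (fun p : ℝ × ℝ => dampA a lam p.2)
      (Set.univ ×ˢ Set.Ico (0:ℝ) Tstar) := by
  rintro ⟨y, t⟩ hq
  have : (-1:ℝ) < t := lt_of_lt_of_le (by norm_num) hq.2.1
  exact ((hasDerivAt_dampA a lam hlam this).continuousAt.comp (f := Prod.snd) (x := (y, t))
    continuous_snd.continuousAt).continuousWithinAt

lemma continuousOn_dampB_snd :
    ContinuousOn (fun p : ℝ × ℝ => dampB a lam p.2)
      (Set.univ ×ˢ Set.Ico (0:ℝ) Tstar) := by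
  rintro ⟨y, t⟩ hq
  have : (-1:ℝ) < t := lt_of_lt_of_le (by norm_num) hq.2.1
  exact ((hasDerivAt_dampB a lam this).continuousAt.comp (f := Prod.snd) (x := (y, t))
    continuous_snd.continuousAt).continuousWithinAt

lemma continuousOn_pow_snd :
    ContinuousOn (fun p : ℝ × ℝ => (1 + p.2) ^ lam)
      (Set.univ ×ˢ Set.Ico (0:ℝ) Tstar) := by
  rintro ⟨y, t⟩ hq
  have h1 : (0:ℝ) < 1 + t := by have := hq.2.1; linarith
  have h2 : ContinuousAt (fun p : ℝ × ℝ => 1 + p.2) (y, t) := by fun_prop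
  exact (h2.rpow_const (Or.inl h1.ne')).continuousWithinAt

end Cont

/-- Construction of the solution by characteristics up to the shock time `T_*(a,λ,c)`:
(i) each `Φ_t(x) = x + f(x)·B(t)` is a strictly increasing C¹ bijection of `ℝ` with
`Φ_t' = μ(t,x) = 1 + f'(x)·B(t) ≥ 1 − c·B(t) > 0`; (ii) the function `φ` determined by
`φ(Φ_t(x), t) = f(x)/A(t)` is a classical solution with initial data `f`; (iii) its spatial
derivative is `∂_x φ(Φ_t(x), t) = (f'(x)/A(t))/μ(t,x)`. -/
theorem stmt10 (a lam c Tstar : ℝ) (hlam : 1 < lam) (hc : 0 < c)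
    (hTs : 0 < Tstar) (hBTs : dampB a lam Tstar = 1 / c)
    (f : ℝ → ℝ) (hf : ContDiff ℝ 1 f) (hf' : ∀ x : ℝ, -c ≤ deriv f x) :
    (∀ t ∈ Set.Ico (0 : ℝ) Tstar,
      StrictMono (fun x => x + f x * dampB a lam t) ∧
      Function.Bijective (fun x => x + f x * dampB a lam t) ∧
      (∀ x : ℝ,
        HasDerivAt (fun y => y + f y * dampB a lam t) (1 + deriv f x * dampB a lam t) x) ∧
      (∀ x : ℝ,
        0 < 1 - c * dampB a lam t ∧
        1 - c * dampB a lam t ≤ 1 + deriv f x * dampB a lam t)) ∧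
    (∃ φ φx φt : ℝ → ℝ → ℝ,
      IsDampedBurgersSol a lam f (Set.Ico 0 Tstar) φ φx φt ∧
      (∀ x : ℝ, ∀ t ∈ Set.Ico (0 : ℝ) Tstar,
        φ (x + f x * dampB a lam t) t = f x / dampA a lam t) ∧
      (∀ x : ℝ, ∀ t ∈ Set.Ico (0 : ℝ) Tstar,
        φx (x + f x * dampB a lam t) t =
          (deriv f x / dampA a lam t) / (1 + deriv f x * dampB a lam t))) := by
  constructor
  · intro t ht
    exact ⟨strictMono_chMap hc hTs hBTs hf hf' ht,
      ⟨(strictMono_chMap hc hTs hBTs hf hf' ht).injective,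
        surjective_chMap hc hTs hBTs hf hf' ht⟩,
      hasDerivAt_chMap hf, mu_bounds hc hTs hBTs hf' ht⟩
  · refine ⟨fun y t => f (chInv a lam f y t) / dampA a lam t,
      fun y t => deriv f (chInv a lam f y t) / dampA a lam t /
        (1 + deriv f (chInv a lam f y t) * dampB a lam t),
      fun y t => -a * (f (chInv a lam f y t) / dampA a lam t) / (1 + t) ^ lam -
        (f (chInv a lam f y t) / dampA a lam t) *
          (deriv f (chInv a lam f y t) / dampA a lam t /
            (1 + deriv f (chInv a lam f y t) * dampB a lam t)),
      ⟨?_, ?_, ?_, ?_, ?_, ?_, ?_⟩, ?_, ?_⟩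
    -- initial data
    · intro x
      beta_reduce
      have h0 : (0:ℝ) ∈ Set.Ico (0:ℝ) Tstar := ⟨le_refl 0, hTs⟩
      have hx : chInv a lam f x 0 = x := by
        have := chInv_left hlam hc hTs hBTs hf hf' h0 x
        rwa [dampB_zero, mul_zero, add_zero] at this
      rw [hx, dampA_zero, div_one]
    -- spatial derivative
    · intro x t htI
      beta_reduce
      have hΦ : chInv a lam f x t + f (chInv a lam f x t) * dampB a lam t = x :=
        chInv_right hlam hc hTs hBTs hf hf' htI x
      have hM := hasFDerivWithinAt_phi hlam hc hTs hBTs hf hf'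
        (x0 := chInv a lam f x t) htI
      rw [hΦ] at hM
      have hcurve : HasDerivWithinAt (fun y : ℝ => (y, t)) ((1:ℝ), (0:ℝ)) Set.univ x :=
        ((hasDerivAt_id x).prodMk (hasDerivAt_const x t)).hasDerivWithinAt
      have hmaps : Set.MapsTo (fun y : ℝ => (y, t)) Set.univ
          (Set.univ ×ˢ Set.Ico (0:ℝ) Tstar) := fun y _ => ⟨trivial, htI⟩
      have hcomp := HasFDerivWithinAt.comp_hasDerivWithinAt x hM hcurve hmaps
      rw [hasDerivWithinAt_univ] at hcomp
      have hfun : ((fun p : ℝ × ℝ => f (chInv a lam f p.1 p.2) * (dampA a lam p.2)⁻¹) ∘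
          (fun y : ℝ => (y, t))) = fun y => f (chInv a lam f y t) / dampA a lam t := by
        funext s; simp [Function.comp, div_eq_mul_inv]
      rw [hfun] at hcomp
      refine hcomp.congr_deriv ?_
      simp
    -- time derivative
    · intro x t htI
      beta_reduce
      have hΦ : chInv a lam f x t + f (chInv a lam f x t) * dampB a lam t = x :=
        chInv_right hlam hc hTs hBTs hf hf' htI x
      have hM := hasFDerivWithinAt_phi hlam hc hTs hBTs hf hf'
        (x0 := chInv a lam f x t) htI
      rw [hΦ] at hM
      have hcurve : HasDerivWithinAt (fun s : ℝ => (x, s)) ((0:ℝ), (1:ℝ))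
          (Set.Ico (0:ℝ) Tstar) t :=
        ((hasDerivAt_const t x).prodMk (hasDerivAt_id t)).hasDerivWithinAt
      have hmaps : Set.MapsTo (fun s : ℝ => (x, s)) (Set.Ico (0:ℝ) Tstar)
          (Set.univ ×ˢ Set.Ico (0:ℝ) Tstar) := fun s hs => ⟨trivial, hs⟩
      have hcomp := HasFDerivWithinAt.comp_hasDerivWithinAt t hM hcurve hmaps
      have hfun : ((fun p : ℝ × ℝ => f (chInv a lam f p.1 p.2) * (dampA a lam p.2)⁻¹) ∘
          (fun s : ℝ => (x, s))) = fun s => f (chInv a lam f x s) / dampA a lam s := by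
        funext s; simp [Function.comp, div_eq_mul_inv]
      rw [hfun] at hcomp
      refine hcomp.congr_deriv ?_
      simp
    -- continuity of φ
    · have hchinv := continuousOn_chInv hlam hc hTs hBTs hf hf'
      exact (hf.continuous.comp_continuousOn hchinv).div
        (continuousOn_dampA_snd (Tstar := Tstar) hlam)
        (fun p _ => (dampA_pos a lam p.2).ne')
    -- continuity of φx
    · have hchinv := continuousOn_chInv hlam hc hTs hBTs hf hf'
      have hd : ContinuousOn (fun p : ℝ × ℝ => deriv f (chInv a lam f p.1 p.2))
          (Set.univ ×ˢ Set.Ico (0:ℝ) Tstar) :=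
        (hf.continuous_deriv le_rfl).comp_continuousOn hchinv
      exact (hd.div (continuousOn_dampA_snd (Tstar := Tstar) hlam)
          (fun p _ => (dampA_pos a lam p.2).ne')).div
        (continuousOn_const.add (hd.mul continuousOn_dampB_snd))
        (fun p hp => by
          have := mu_bounds hc hTs hBTs hf' hp.2 (chInv a lam f p.1 p.2)
          exact ne_of_gt (by linarith [this.1, this.2]))
    -- continuity of φt
    · have hchinv := continuousOn_chInv hlam hc hTs hBTs hf hf'
      have hd : ContinuousOn (fun p : ℝ × ℝ => deriv f (chInv a lam f p.1 p.2))
          (Set.univ ×ˢ Set.Ico (0:ℝ) Tstar) :=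
        (hf.continuous_deriv le_rfl).comp_continuousOn hchinv
      have hφ : ContinuousOn (fun p : ℝ × ℝ => f (chInv a lam f p.1 p.2) / dampA a lam p.2)
          (Set.univ ×ˢ Set.Ico (0:ℝ) Tstar) :=
        (hf.continuous.comp_continuousOn hchinv).div
          (continuousOn_dampA_snd (Tstar := Tstar) hlam)
          (fun p _ => (dampA_pos a lam p.2).ne')
      have hφx : ContinuousOn (fun p : ℝ × ℝ =>
          deriv f (chInv a lam f p.1 p.2) / dampA a lam p.2 /
            (1 + deriv f (chInv a lam f p.1 p.2) * dampB a lam p.2))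
          (Set.univ ×ˢ Set.Ico (0:ℝ) Tstar) :=
        (hd.div (continuousOn_dampA_snd (Tstar := Tstar) hlam)
            (fun p _ => (dampA_pos a lam p.2).ne')).div
          (continuousOn_const.add (hd.mul continuousOn_dampB_snd))
          (fun p hp => by
            have := mu_bounds hc hTs hBTs hf' hp.2 (chInv a lam f p.1 p.2)
            exact ne_of_gt (by linarith [this.1, this.2]))
      exact ((continuousOn_const.mul hφ).div (continuousOn_pow_snd (Tstar := Tstar))
          (fun p hp => (Real.rpow_pos_of_pos (by have := hp.2.1; linarith) lam).ne')).sub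
        (hφ.mul hφx)
    -- the PDE
    · intro x t _
      beta_reduce
      ring
    -- value along characteristics
    · intro x t htI
      beta_reduce
      have := chInv_left hlam hc hTs hBTs hf hf' htI x
      simp only [this]
    -- spatial derivative along characteristics
    · intro x t htI
      beta_reduce
      have := chInv_left hlam hc hTs hBTs hf hf' htI x
      simp only [this]
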